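/- arXiv:2311.06412 — 4 statements merged into one kernel-verified Lean document; each statement's English description precedes it below -/
import Mathlib

section
/- Let P be a superuniform random variable (P(P ≤ s) ≤ s for all s ∈ [0,1]) that may be arbitrarily dependent on a strictly positive random variable R. Let U be a superuniform random variable independent of the pair (P, R), let c ≥ 0 be a constant, and let β be a reshaping function. Then E[ 1{P ≤ c·β(R/U)} / R ] ≤ c. -/
open MeasureTheory ProbabilityTheory
open scoped ENNReal

variable {Ω : Type*} [MeasurableSpace Ω]

lemma beta_int (ν : Measure ℝ) [IsProbabilityMeasure ν] (r : ℝ) :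
    IntegrableOn (fun x : ℝ => x) (Set.Icc 0 r) ν :=
  ContinuousOn.integrableOn_compact isCompact_Icc continuous_id.continuousOn

lemma beta_nonneg (ν : Measure ℝ) [IsProbabilityMeasure ν] (β : ℝ → ℝ)
    (hβ : ∀ r, β r = ∫ x in Set.Icc (0 : ℝ) r, x ∂ν) (r : ℝ) : 0 ≤ β r := by
  rw [hβ]
  exact setIntegral_nonneg measurableSet_Icc fun x hx => hx.1

lemma beta_mono (ν : Measure ℝ) [IsProbabilityMeasure ν] (β : ℝ → ℝ)
    (hβ : ∀ r, β r = ∫ x in Set.Icc (0 : ℝ) r, x ∂ν) : Monotone β := by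
  intro a b hab
  rw [hβ, hβ]
  refine setIntegral_mono_set (beta_int ν b) ?_ ?_
  · exact (ae_restrict_iff' measurableSet_Icc).2 (ae_of_all _ fun x hx => hx.1)
  · exact HasSubset.Subset.eventuallyLE (Set.Icc_subset_Icc_right hab)

lemma beta_ofReal_eq (ν : Measure ℝ) [IsProbabilityMeasure ν] (β : ℝ → ℝ)
    (hβ : ∀ r, β r = ∫ x in Set.Icc (0 : ℝ) r, x ∂ν) (r : ℝ) :
    ENNReal.ofReal (β r) = ∫⁻ x in Set.Icc (0:ℝ) r, ENNReal.ofReal x ∂ν := by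
  rw [hβ]
  exact ofReal_integral_eq_lintegral_ofReal (beta_int ν r)
    ((ae_restrict_iff' measurableSet_Icc).2 (ae_of_all _ fun x hx => hx.1))

lemma beta_tail (ν : Measure ℝ) [IsProbabilityMeasure ν] (hν : ν (Set.Iio 0) = 0)
    (β : ℝ → ℝ) (hβ : ∀ r, β r = ∫ x in Set.Icc (0 : ℝ) r, x ∂ν) :
    ∫⁻ t in Set.Ioi (0:ℝ), ENNReal.ofReal (β (1/t)) ∂volume ≤ 1 := by
  have hx0 : ∀ᵐ x ∂ν, 0 ≤ x := by
    rw [ae_iff]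
    have hs : {x : ℝ | ¬ 0 ≤ x} = Set.Iio 0 := by ext x; simp [not_le]
    rw [hs]
    exact hν
  have h1 : ∀ t : ℝ, ENNReal.ofReal (β (1/t)) =
      ∫⁻ x, (if 0 ≤ x ∧ x ≤ 1/t then ENNReal.ofReal x else 0) ∂ν := by
    intro t
    rw [beta_ofReal_eq ν β hβ (1/t), ← lintegral_indicator measurableSet_Icc]
    refine lintegral_congr fun x => ?_
    simp [Set.indicator_apply, Set.mem_Icc]
  calc (∫⁻ t in Set.Ioi (0:ℝ), ENNReal.ofReal (β (1/t)) ∂volume)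
      = ∫⁻ t in Set.Ioi (0:ℝ), ∫⁻ x, (if 0 ≤ x ∧ x ≤ 1/t then ENNReal.ofReal x else 0) ∂ν ∂volume :=
        lintegral_congr fun t => h1 t
    _ = ∫⁻ x, ∫⁻ t in Set.Ioi (0:ℝ), (if 0 ≤ x ∧ x ≤ 1/t then ENNReal.ofReal x else 0) ∂volume ∂ν := by
        refine lintegral_lintegral_swap (Measurable.aemeasurable ?_)
        refine Measurable.ite ?_ (measurable_snd.ennreal_ofReal) measurable_const
        exact (measurableSet_le measurable_const measurable_snd).inter
          (measurableSet_le measurable_snd (measurable_const.div measurable_fst))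
    _ ≤ ∫⁻ _, 1 ∂ν := by
        refine lintegral_mono_ae ?_
        filter_upwards [hx0] with x hx
        rcases eq_or_lt_of_le hx with h0 | hxpos
        · simp [← h0]
        · have hmt : MeasurableSet {t : ℝ | x ≤ 1/t} :=
            measurableSet_le measurable_const (measurable_const.div measurable_id)
          have hset : {t : ℝ | x ≤ 1/t} ∩ Set.Ioi 0 = Set.Ioc 0 (1/x) := by
            ext t
            simp only [Set.mem_inter_iff, Set.mem_setOf_eq, Set.mem_Ioi, Set.mem_Ioc]
            constructor
            · rintro ⟨hxt, ht⟩
              refine ⟨ht, ?_⟩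
              rw [le_div_iff₀ hxpos]
              have h2 := (le_div_iff₀ ht).mp hxt
              linarith
            · rintro ⟨ht, htx⟩
              refine ⟨?_, ht⟩
              rw [le_div_iff₀ ht]
              have h2 := (le_div_iff₀ hxpos).mp htx
              linarith
          have heq : (fun t : ℝ => (if 0 ≤ x ∧ x ≤ 1/t then ENNReal.ofReal x else 0))
              = fun t => Set.indicator {t : ℝ | x ≤ 1/t} (fun _ => ENNReal.ofReal x) t := by
            funext t
            simp [Set.indicator_apply, hx]
          rw [heq, lintegral_indicator_const hmt, Measure.restrict_apply hmt, hset,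
            Real.volume_Ioc, sub_zero, ← ENNReal.ofReal_mul hxpos.le,
            mul_one_div_cancel hxpos.ne', ENNReal.ofReal_one]
    _ = 1 := by simp

lemma key_bound (μ : Measure Ω) [IsProbabilityMeasure μ] (U : Ω → ℝ) (hUm : Measurable U)
    (hUsu : ∀ s ∈ Set.Icc (0 : ℝ) 1, μ {ω | U ω ≤ s} ≤ ENNReal.ofReal s)
    (β : ℝ → ℝ) (hβm : Monotone β) (c : ℝ) (hc : 0 ≤ c)
    (p r : ℝ) (hr : 0 < r) :
    ENNReal.ofReal (1 / r) * μ.map U {u | p ≤ c * β (r / u)} ≤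
      ∫⁻ t in Set.Ioi (0:ℝ), (if p ≤ c * β (1 / t) then 1 else 0) ∂volume := by
  haveI : IsProbabilityMeasure (μ.map U) := Measure.isProbabilityMeasure_map hUm.aemeasurable
  set T := ∫⁻ t in Set.Ioi (0:ℝ), (if p ≤ c * β (1 / t) then (1:ℝ≥0∞) else 0) ∂volume with hT
  by_cases hTtop : T = ⊤
  · rw [hTtop]; exact le_top
  set τ := T.toReal with hτ
  have hτ0 : 0 ≤ τ := ENNReal.toReal_nonneg
  have hTτ : T = ENNReal.ofReal τ := (ENNReal.ofReal_toReal hTtop).symm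
  have hsub : {u : ℝ | p ≤ c * β (r / u)} ⊆ Set.Iic (r * τ) := by
    intro u hu
    rcases le_or_gt u 0 with hu0 | hu0
    · exact hu0.trans (mul_nonneg hr.le hτ0)
    · have hur : 0 < u / r := div_pos hu0 hr
      have hle : ENNReal.ofReal (u / r) ≤ T := by
        calc ENNReal.ofReal (u / r)
            = ∫⁻ _ in Set.Ioc (0:ℝ) (u/r), (1:ℝ≥0∞) ∂volume := by
              rw [setLIntegral_one, Real.volume_Ioc, sub_zero]
          _ = ∫⁻ t in Set.Ioc (0:ℝ) (u/r),
                (if p ≤ c * β (1/t) then (1:ℝ≥0∞) else 0) ∂volume := by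
              refine (setLIntegral_congr_fun measurableSet_Ioc
                (fun t ht => ?_)).symm
              have h1 : r / u ≤ 1 / t := by
                have h2 := one_div_le_one_div_of_le ht.1 ht.2
                rwa [one_div_div] at h2
              have h3 : p ≤ c * β (1/t) :=
                hu.trans (mul_le_mul_of_nonneg_left (hβm h1) hc)
              rw [if_pos h3]
          _ ≤ T := lintegral_mono_set Set.Ioc_subset_Ioi_self
      rw [hTτ] at hle
      have h4 := (ENNReal.ofReal_le_ofReal_iff hτ0).mp hle
      calc u = (u / r) * r := by field_simp
        _ ≤ τ * r := mul_le_mul_of_nonneg_right h4 hr.le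
        _ = r * τ := mul_comm _ _
  have hμ : μ.map U {u | p ≤ c * β (r / u)} ≤ ENNReal.ofReal (r * τ) := by
    have h1 : μ.map U {u | p ≤ c * β (r / u)} ≤ μ.map U (Set.Iic (r * τ)) :=
      measure_mono hsub
    rw [Measure.map_apply hUm measurableSet_Iic] at h1
    have h2 : U ⁻¹' Set.Iic (r * τ) = {ω | U ω ≤ r * τ} := rfl
    rw [h2] at h1
    rcases le_or_gt (r * τ) 1 with h | h
    · exact h1.trans (hUsu _ ⟨mul_nonneg hr.le hτ0, h⟩)
    · exact h1.trans ((prob_le_one).trans (ENNReal.one_le_ofReal.mpr h.le))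
  calc ENNReal.ofReal (1/r) * μ.map U {u | p ≤ c * β (r / u)}
      ≤ ENNReal.ofReal (1/r) * ENNReal.ofReal (r * τ) := mul_le_mul_right hμ _
    _ = ENNReal.ofReal ((1/r) * (r * τ)) := (ENNReal.ofReal_mul (by positivity)).symm
    _ = ENNReal.ofReal τ := by rw [← mul_assoc, one_div_mul_cancel hr.ne', one_mul]
    _ = T := hTτ.symm

/-- **Randomized superuniformity lemma (Lemma 1 of Xu–Ramdas).** Let `P` be a
superuniform random variable arbitrarily dependent on a strictly positive random
variable `R`, let `U` be superuniform and independent of the pair `(P, R)`, let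
`c ≥ 0`, and let `β` be a reshaping function. Then
`𝔼[ 1{P ≤ c·β(R/U)} / R ] ≤ c`. -/
theorem randomized_superuniformity_lemma (μ : Measure Ω) [IsProbabilityMeasure μ]
    (P R U : Ω → ℝ) (hPm : Measurable P) (hRm : Measurable R) (hUm : Measurable U)
    (hPsu : ∀ s ∈ Set.Icc (0 : ℝ) 1, μ {ω | P ω ≤ s} ≤ ENNReal.ofReal s)
    (hRpos : ∀ ω, 0 < R ω)
    (hUsu : ∀ s ∈ Set.Icc (0 : ℝ) 1, μ {ω | U ω ≤ s} ≤ ENNReal.ofReal s)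
    (hindep : IndepFun U (fun ω => (P ω, R ω)) μ)
    (c : ℝ) (hc : 0 ≤ c)
    (ν : Measure ℝ) [IsProbabilityMeasure ν] (hν : ν (Set.Iio 0) = 0)
    (β : ℝ → ℝ) (hβ : ∀ r, β r = ∫ x in Set.Icc (0 : ℝ) r, x ∂ν) :
    ∫⁻ ω, (if P ω ≤ c * β (R ω / U ω) then ENNReal.ofReal (1 / R ω) else 0) ∂μ ≤
      ENNReal.ofReal c := by
  have hβ0 : ∀ r, 0 ≤ β r := beta_nonneg ν β hβ
  have hβmono : Monotone β := beta_mono ν β hβ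
  have hβmeas : Measurable β := hβmono.measurable
  have hPRm : Measurable fun ω => (P ω, R ω) := hPm.prodMk hRm
  have hVm : Measurable fun ω => (U ω, (P ω, R ω)) := hUm.prodMk hPRm
  set μU := μ.map U with hμU
  set μPR := μ.map (fun ω => (P ω, R ω)) with hμPR
  haveI : IsProbabilityMeasure μU := Measure.isProbabilityMeasure_map hUm.aemeasurable
  haveI : IsProbabilityMeasure μPR := Measure.isProbabilityMeasure_map hPRm.aemeasurable
  have hmap : μ.map (fun ω => (U ω, (P ω, R ω))) = μU.prod μPR :=
    (indepFun_iff_map_prod_eq_prod_map_map hUm.aemeasurable hPRm.aemeasurable).mp hindep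
  set g : ℝ × (ℝ × ℝ) → ℝ≥0∞ :=
    fun z => if z.2.1 ≤ c * β (z.2.2 / z.1) then ENNReal.ofReal (1 / z.2.2) else 0 with hg
  have hgm : Measurable g := by
    refine Measurable.ite ?_ ?_ measurable_const
    · exact measurableSet_le (measurable_fst.comp measurable_snd)
        (measurable_const.mul (hβmeas.comp
          ((measurable_snd.comp measurable_snd).div measurable_fst)))
    · exact (measurable_const.div (measurable_snd.comp measurable_snd)).ennreal_ofReal
  have hstep1 : (∫⁻ ω, (if P ω ≤ c * β (R ω / U ω) then ENNReal.ofReal (1 / R ω) else 0) ∂μ)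
      = ∫⁻ q, ∫⁻ u, g (u, q) ∂μU ∂μPR := by
    have hrw : (fun ω => if P ω ≤ c * β (R ω / U ω) then ENNReal.ofReal (1 / R ω) else 0)
        = fun ω => g (U ω, (P ω, R ω)) := rfl
    rw [hrw, ← lintegral_map hgm hVm, hmap]
    exact lintegral_prod_symm g hgm.aemeasurable
  have hstep2 : (∫⁻ q, ∫⁻ u, g (u, q) ∂μU ∂μPR)
      ≤ ∫⁻ q : ℝ × ℝ, ∫⁻ t in Set.Ioi (0:ℝ),
          (if q.1 ≤ c * β (1/t) then (1:ℝ≥0∞) else 0) ∂volume ∂μPR := by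
    refine lintegral_mono_ae ?_
    have hae : ∀ᵐ q : ℝ × ℝ ∂μPR, 0 < q.2 := by
      rw [hμPR, ae_map_iff hPRm.aemeasurable
        (measurableSet_lt measurable_const measurable_snd)]
      exact ae_of_all _ fun ω => hRpos ω
    filter_upwards [hae] with q hq
    have hset : MeasurableSet {u : ℝ | q.1 ≤ c * β (q.2 / u)} :=
      measurableSet_le measurable_const
        (measurable_const.mul (hβmeas.comp (measurable_const.div measurable_id)))
    have heq : (∫⁻ u, g (u, q) ∂μU)
        = ENNReal.ofReal (1 / q.2) * μU {u | q.1 ≤ c * β (q.2 / u)} := by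
      have h5 : (fun u => g (u, q)) = fun u =>
          Set.indicator {u : ℝ | q.1 ≤ c * β (q.2 / u)}
            (fun _ => ENNReal.ofReal (1 / q.2)) u := by
        funext u
        simp [hg, Set.indicator_apply]
      rw [h5, lintegral_indicator_const hset]
    rw [heq]
    exact key_bound μ U hUm hUsu β hβmono c hc q.1 q.2 hq
  have hstep3 : (∫⁻ q : ℝ × ℝ, ∫⁻ t in Set.Ioi (0:ℝ),
        (if q.1 ≤ c * β (1/t) then (1:ℝ≥0∞) else 0) ∂volume ∂μPR)
      = ∫⁻ t in Set.Ioi (0:ℝ), μPR {q : ℝ × ℝ | q.1 ≤ c * β (1/t)} ∂volume := by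
    rw [lintegral_lintegral_swap]
    · refine lintegral_congr fun t => ?_
      have h6 : (fun q : ℝ × ℝ => (if q.1 ≤ c * β (1/t) then (1:ℝ≥0∞) else 0))
          = fun q => Set.indicator {q : ℝ × ℝ | q.1 ≤ c * β (1/t)}
              (fun _ => (1:ℝ≥0∞)) q := by
        funext q
        simp [Set.indicator_apply]
      rw [h6, lintegral_indicator_const
        (measurableSet_le measurable_fst measurable_const), one_mul]
    · refine Measurable.aemeasurable ?_
      refine Measurable.ite ?_ measurable_const measurable_const
      exact measurableSet_le (measurable_fst.comp measurable_fst)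
        (measurable_const.mul (hβmeas.comp (measurable_const.div measurable_snd)))
  have hstep4 : ∀ t : ℝ, μPR {q : ℝ × ℝ | q.1 ≤ c * β (1/t)}
      ≤ ENNReal.ofReal (c * β (1/t)) := by
    intro t
    have hmq : μPR {q : ℝ × ℝ | q.1 ≤ c * β (1/t)} = μ {ω | P ω ≤ c * β (1/t)} := by
      rw [hμPR, Measure.map_apply hPRm (measurableSet_le measurable_fst measurable_const)]
      rfl
    rw [hmq]
    rcases le_or_gt (c * β (1/t)) 1 with h | h
    · exact hPsu _ ⟨mul_nonneg hc (hβ0 _), h⟩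
    · exact (prob_le_one).trans (ENNReal.one_le_ofReal.mpr h.le)
  calc ∫⁻ ω, (if P ω ≤ c * β (R ω / U ω) then ENNReal.ofReal (1 / R ω) else 0) ∂μ
      = ∫⁻ q, ∫⁻ u, g (u, q) ∂μU ∂μPR := hstep1
    _ ≤ ∫⁻ q : ℝ × ℝ, ∫⁻ t in Set.Ioi (0:ℝ),
          (if q.1 ≤ c * β (1/t) then (1:ℝ≥0∞) else 0) ∂volume ∂μPR := hstep2
    _ = ∫⁻ t in Set.Ioi (0:ℝ), μPR {q : ℝ × ℝ | q.1 ≤ c * β (1/t)} ∂volume := hstep3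
    _ ≤ ∫⁻ t in Set.Ioi (0:ℝ), ENNReal.ofReal (c * β (1/t)) ∂volume :=
        lintegral_mono fun t => hstep4 t
    _ = ENNReal.ofReal c * ∫⁻ t in Set.Ioi (0:ℝ), ENNReal.ofReal (β (1/t)) ∂volume := by
        simp_rw [ENNReal.ofReal_mul hc]
        exact lintegral_const_mul' _ _ ENNReal.ofReal_ne_top
    _ ≤ ENNReal.ofReal c * 1 := mul_le_mul_right (beta_tail ν hν β hβ) _
    _ = ENNReal.ofReal c := mul_one _
end

section
/- Let E be a nonnegative random variable with E[E] ≤ 1, let α̂ be a random variable with values in (0, 1] that may depend arbitrarily on E, and let U be uniformly distributed on [0,1] and independent of the pair (E, α̂). Define the randomized e-value S = max( E·1{E ≥ 1/α̂}, (1/α̂)·1{U ≤ E·α̂} ). Then E[S] ≤ 1, i.e., S is again an e-value. -/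
open MeasureTheory ProbabilityTheory
open scoped ENNReal

variable {Ω : Type*} [MeasurableSpace Ω]

/-- **Stochastic rounding preserves e-values (Proposition 2 of Xu–Ramdas).**
Let `E` be a nonnegative random variable with `𝔼[E] ≤ 1`, let `α̂` take values in
`(0,1]` and be arbitrarily dependent on `E`, and let `U` be uniform on `[0,1]` and
independent of the pair `(E, α̂)`. Then the randomized e-value
`S = max( E·1{E ≥ 1/α̂}, (1/α̂)·1{U ≤ E·α̂} )` satisfies `𝔼[S] ≤ 1`. -/
theorem stochastic_rounding_evalue (μ : Measure Ω) [IsProbabilityMeasure μ]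
    (E : Ω → ℝ) (hEm : Measurable E) (hE0 : ∀ ω, 0 ≤ E ω)
    (hE1 : ∫⁻ ω, ENNReal.ofReal (E ω) ∂μ ≤ 1)
    (αhat : Ω → ℝ) (hαm : Measurable αhat) (hα : ∀ ω, αhat ω ∈ Set.Ioc (0 : ℝ) 1)
    (U : Ω → ℝ) (hUm : Measurable U)
    (hUunif : μ.map U = (volume : Measure ℝ).restrict (Set.Icc 0 1))
    (hindep : IndepFun U (fun ω => (E ω, αhat ω)) μ) :
    ∫⁻ ω, ENNReal.ofReal
        (max (E ω * (if 1 / αhat ω ≤ E ω then 1 else 0))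
          ((1 / αhat ω) * (if U ω ≤ E ω * αhat ω then 1 else 0))) ∂μ ≤ 1 := by
  classical
  set ν : Measure ℝ := (volume : Measure ℝ).restrict (Set.Icc 0 1) with hν
  set W : Ω → ℝ × ℝ := fun ω => (E ω, αhat ω) with hWdef
  have hWm : Measurable W := hEm.prodMk hαm
  set F : ℝ × (ℝ × ℝ) → ℝ≥0∞ := fun p =>
    ENNReal.ofReal (1 / p.2.2) * (if p.2.1 < 1 / p.2.2 then 1 else 0) *
      (if p.1 ≤ p.2.1 * p.2.2 then 1 else 0) with hFdef
  have hFm : Measurable F := by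
    refine Measurable.mul (Measurable.mul ?_ ?_) ?_
    · exact (measurable_const.div (measurable_snd.comp measurable_snd)).ennreal_ofReal
    · exact Measurable.ite
        (measurableSet_lt (measurable_fst.comp measurable_snd)
          (measurable_const.div (measurable_snd.comp measurable_snd)))
        measurable_const measurable_const
    · exact Measurable.ite
        (measurableSet_le measurable_fst
          ((measurable_fst.comp measurable_snd).mul (measurable_snd.comp measurable_snd)))
        measurable_const measurable_const
  -- pointwise decomposition of the integrand
  have key : ∀ ω, ENNReal.ofReal
      (max (E ω * (if 1 / αhat ω ≤ E ω then 1 else 0))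
        ((1 / αhat ω) * (if U ω ≤ E ω * αhat ω then 1 else 0)))
      = ENNReal.ofReal (E ω) * (if 1 / αhat ω ≤ E ω then 1 else 0) + F (U ω, W ω) := by
    intro ω
    obtain ⟨ha0, ha1⟩ := hα ω
    have hainv : 0 ≤ 1 / αhat ω := by positivity
    by_cases h : 1 / αhat ω ≤ E ω
    · have h2 : ¬ E ω < 1 / αhat ω := not_lt.mpr h
      have hmax : max (E ω * 1) ((1 / αhat ω) * (if U ω ≤ E ω * αhat ω then 1 else 0))
          = E ω := by
        rw [mul_one]
        apply max_eq_left
        rcases le_or_gt (U ω) (E ω * αhat ω) with h' | h'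
        · rw [if_pos h', mul_one]; exact h
        · rw [if_neg (not_le.mpr h'), mul_zero]; exact hE0 ω
      rw [if_pos h, hmax]
      show ENNReal.ofReal (E ω) =
        ENNReal.ofReal (E ω) * (if 1 / αhat ω ≤ E ω then (1 : ℝ≥0∞) else 0) +
        (ENNReal.ofReal (1 / αhat ω) * (if E ω < 1 / αhat ω then (1 : ℝ≥0∞) else 0)) *
          (if U ω ≤ E ω * αhat ω then (1 : ℝ≥0∞) else 0)
      rw [if_pos h, if_neg h2, mul_one, mul_zero, zero_mul, add_zero]
    · have h2 : E ω < 1 / αhat ω := not_le.mp h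
      have hmax : max (E ω * 0) ((1 / αhat ω) * (if U ω ≤ E ω * αhat ω then 1 else 0))
          = (1 / αhat ω) * (if U ω ≤ E ω * αhat ω then 1 else 0) := by
        rw [mul_zero]
        apply max_eq_right
        rcases le_or_gt (U ω) (E ω * αhat ω) with h' | h'
        · rw [if_pos h', mul_one]; exact hainv
        · rw [if_neg (not_le.mpr h'), mul_zero]
      rw [if_neg h, hmax]
      show _ =
        ENNReal.ofReal (E ω) * (if 1 / αhat ω ≤ E ω then (1 : ℝ≥0∞) else 0) +
        (ENNReal.ofReal (1 / αhat ω) * (if E ω < 1 / αhat ω then (1 : ℝ≥0∞) else 0)) *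
          (if U ω ≤ E ω * αhat ω then (1 : ℝ≥0∞) else 0)
      rw [if_neg h, if_pos h2, mul_one, mul_zero, zero_add]
      rcases le_or_gt (U ω) (E ω * αhat ω) with h' | h'
      · rw [if_pos h', if_pos h', mul_one, mul_one]
      · rw [if_neg (not_le.mpr h'), if_neg (not_le.mpr h'), mul_zero, mul_zero,
          ENNReal.ofReal_zero]
  have hg1m : Measurable fun ω =>
      ENNReal.ofReal (E ω) * (if 1 / αhat ω ≤ E ω then (1 : ℝ≥0∞) else 0) :=
    hEm.ennreal_ofReal.mul
      (Measurable.ite (measurableSet_le (measurable_const.div hαm) hEm)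
        measurable_const measurable_const)
  rw [lintegral_congr key, lintegral_add_left hg1m]
  -- handle the second term via independence
  haveI : IsProbabilityMeasure (μ.map W) := Measure.isProbabilityMeasure_map hWm.aemeasurable
  have hmap : μ.map (fun ω => (U ω, W ω)) = (μ.map U).prod (μ.map W) :=
    (indepFun_iff_map_prod_eq_prod_map_map hUm.aemeasurable hWm.aemeasurable).mp hindep
  have hinner_meas : Measurable fun w : ℝ × ℝ => ∫⁻ u, F (u, w) ∂ν :=
    Measurable.lintegral_prod_left' hFm
  have step2 : ∫⁻ ω, F (U ω, W ω) ∂μ = ∫⁻ ω, (∫⁻ u, F (u, W ω) ∂ν) ∂μ := by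
    calc ∫⁻ ω, F (U ω, W ω) ∂μ
        = ∫⁻ p, F p ∂(μ.map (fun ω => (U ω, W ω))) :=
          (lintegral_map hFm (hUm.prodMk hWm)).symm
      _ = ∫⁻ p, F p ∂(ν.prod (μ.map W)) := by rw [hmap, hUunif]
      _ = ∫⁻ w, ∫⁻ u, F (u, w) ∂ν ∂(μ.map W) := lintegral_prod_symm' F hFm
      _ = ∫⁻ ω, (∫⁻ u, F (u, W ω) ∂ν) ∂μ := lintegral_map hinner_meas hWm
  have inner : ∀ ω, (∫⁻ u, F (u, W ω) ∂ν)
      = ENNReal.ofReal (E ω) * (if E ω < 1 / αhat ω then 1 else 0) := by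
    intro ω
    obtain ⟨ha0, ha1⟩ := hα ω
    by_cases h : E ω < 1 / αhat ω
    · have hprod : 0 ≤ E ω * αhat ω := mul_nonneg (hE0 ω) ha0.le
      have hlt1 : E ω * αhat ω ≤ 1 := by
        have := mul_lt_mul_of_pos_right h ha0
        have h1 : 1 / αhat ω * αhat ω = 1 := by field_simp
        linarith [h1 ▸ this]
      have hind : ∀ u : ℝ, (if u ≤ E ω * αhat ω then (1 : ℝ≥0∞) else 0)
          = Set.indicator (Set.Iic (E ω * αhat ω)) (fun _ => 1) u := by
        intro u; simp [Set.indicator_apply, Set.mem_Iic]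
      have hset : Set.Iic (E ω * αhat ω) ∩ Set.Icc (0:ℝ) 1 = Set.Icc 0 (E ω * αhat ω) := by
        ext u
        simp only [Set.mem_inter_iff, Set.mem_Iic, Set.mem_Icc]
        constructor
        · rintro ⟨h1, h2, h3⟩; exact ⟨h2, h1⟩
        · rintro ⟨h1, h2⟩; exact ⟨h2, h1, le_trans h2 hlt1⟩
      have hνIic : ν (Set.Iic (E ω * αhat ω)) = ENNReal.ofReal (E ω * αhat ω) := by
        rw [hν, Measure.restrict_apply measurableSet_Iic, hset, Real.volume_Icc, sub_zero]
      calc (∫⁻ u, F (u, W ω) ∂ν)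
          = ∫⁻ u, ENNReal.ofReal (1 / αhat ω) *
              Set.indicator (Set.Iic (E ω * αhat ω)) (fun _ => (1 : ℝ≥0∞)) u ∂ν := by
            refine lintegral_congr fun u => ?_
            show (ENNReal.ofReal (1 / αhat ω) * (if E ω < 1 / αhat ω then (1 : ℝ≥0∞) else 0)) *
                (if u ≤ E ω * αhat ω then (1 : ℝ≥0∞) else 0) = _
            rw [if_pos h, mul_one, hind u]
        _ = ENNReal.ofReal (1 / αhat ω) * ν (Set.Iic (E ω * αhat ω)) := by
            rw [lintegral_const_mul _ ((measurable_const (a := (1:ℝ≥0∞))).indicator measurableSet_Iic),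
              lintegral_indicator measurableSet_Iic, setLIntegral_one]
        _ = ENNReal.ofReal (E ω) * (if E ω < 1 / αhat ω then 1 else 0) := by
            rw [hνIic, if_pos h, mul_one, ← ENNReal.ofReal_mul (by positivity)]
            congr 1
            field_simp
    · have hz : ∀ u : ℝ, F (u, W ω) = 0 := by
        intro u
        show (ENNReal.ofReal (1 / αhat ω) * (if E ω < 1 / αhat ω then (1 : ℝ≥0∞) else 0)) *
            (if u ≤ E ω * αhat ω then (1 : ℝ≥0∞) else 0) = 0
        rw [if_neg h, mul_zero, zero_mul]
      rw [if_neg h, mul_zero]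
      simp only [hz]
      exact lintegral_zero
  rw [step2, lintegral_congr inner, ← lintegral_add_left hg1m]
  refine le_trans (le_of_eq (lintegral_congr fun ω => ?_)) hE1
  by_cases h : 1 / αhat ω ≤ E ω
  · rw [if_pos h, if_neg (not_lt.mpr h), mul_one, mul_zero, add_zero]
  · rw [if_neg h, if_pos (not_le.mp h), mul_one, mul_zero, zero_add]
end

section
/- Let E ≥ 0 and α̂ ∈ (0, 1] be real numbers and let u ∈ (0, 1]. Define S = max( E·1{E ≥ 1/α̂}, (1/α̂)·1{u ≤ E·α̂} ). Then S ≥ 1/α̂ if and only if E ≥ u/α̂. In particular, rejecting when the stochastically-rounded e-value S exceeds 1/α̂ is equivalent to rejecting when E exceeds the randomized threshold u/α̂. -/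
/-- **Rejection by the stochastically rounded e-value is rejection at a randomized
threshold.** For `E ≥ 0`, `α̂ ∈ (0,1]`, and `u ∈ (0,1]`, the stochastically rounded
e-value `S = max( E·1{E ≥ 1/α̂}, (1/α̂)·1{u ≤ E·α̂} )` satisfies `S ≥ 1/α̂` if and
only if `E ≥ u/α̂`. -/
theorem stochastic_rounding_rejection_iff
    (E αhat u : ℝ) (hE : 0 ≤ E) (hα0 : 0 < αhat) (hα1 : αhat ≤ 1)
    (hu0 : 0 < u) (hu1 : u ≤ 1) :
    1 / αhat ≤ max (E * (if 1 / αhat ≤ E then 1 else 0))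
        ((1 / αhat) * (if u ≤ E * αhat then 1 else 0)) ↔ u / αhat ≤ E := by
  have hkey : u / αhat ≤ E ↔ u ≤ E * αhat := div_le_iff₀ hα0
  have hpos : 0 < 1 / αhat := by positivity
  by_cases h2 : u ≤ E * αhat
  · simp only [if_pos h2, mul_one]
    exact ⟨fun _ => hkey.mpr h2, fun _ => le_max_right _ _⟩
  · have h1 : ¬ 1 / αhat ≤ E := fun h =>
      h2 (hu1.trans (by have := (div_le_iff₀ hα0).mp h; linarith))
    simp only [if_neg h1, if_neg h2, mul_zero, max_self]
    exact ⟨fun h => absurd h (not_le.mpr hpos), fun h => absurd (hkey.mp h) h2⟩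
end

section
/- Fix a level α ∈ [0,1], a discount sequence (γ_t)_{t≥1}, and a horizon t ∈ ℕ. Let p_1, …, p_t and q_1, …, q_t be real numbers in [0,1] with p_j ≤ q_j for all j ≤ t. Let (R_j(p)) and (R_j(q)) be the LOND discovery sets applied to the two sequences: R_0 = ∅, threshold α_j = α·γ_j·(|R_{j-1}|+1), and R_j = R_{j-1} ∪ {j} iff the j-th value is ≤ α_j. Then R_j(q) ⊆ R_j(p) for every j ≤ t; in particular |R_j(q)| ≤ |R_j(p)| and every LOND threshold for the p-sequence is at least the corresponding threshold for the q-sequence. -/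
/-- The LOND discovery sets applied to a deterministic sequence of values:
`R 0 = ∅`, threshold `α_j = α·γ_j·(|R_{j-1}|+1)`, and `R_j = R_{j-1} ∪ {j}` iff the
`j`-th value is at most `α_j`. -/
noncomputable def LONDsets (α : ℝ) (γ : ℕ → ℝ) (p : ℕ → ℝ) : ℕ → Finset ℕ
  | 0 => ∅
  | j + 1 =>
    let R := LONDsets α γ p j
    if p (j + 1) ≤ α * γ (j + 1) * ((R.card : ℝ) + 1) then insert (j + 1) R else R

/-- **LOND is monotone in its input values.** If `p_j ≤ q_j` for all `j ≤ t`, then the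
LOND discovery sets satisfy `R_j(q) ⊆ R_j(p)` for every `j ≤ t`; in particular
`|R_j(q)| ≤ |R_j(p)|` and every LOND threshold for the `p`-sequence is at least the
corresponding threshold for the `q`-sequence. -/
theorem LOND_monotone
    (α : ℝ) (hα0 : 0 ≤ α) (hα1 : α ≤ 1)
    (γ : ℕ → ℝ) (hγ0 : ∀ t, 0 ≤ γ t) (hγ1 : ∑' t : ℕ, γ (t + 1) ≤ 1)
    (t : ℕ) (p q : ℕ → ℝ)
    (hp01 : ∀ j, j ≤ t → p j ∈ Set.Icc (0 : ℝ) 1)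
    (hq01 : ∀ j, j ≤ t → q j ∈ Set.Icc (0 : ℝ) 1)
    (hpq : ∀ j, j ≤ t → p j ≤ q j) :
    ∀ j, j ≤ t →
      LONDsets α γ q j ⊆ LONDsets α γ p j ∧
      (LONDsets α γ q j).card ≤ (LONDsets α γ p j).card ∧
      α * γ (j + 1) * (((LONDsets α γ q j).card : ℝ) + 1) ≤
        α * γ (j + 1) * (((LONDsets α γ p j).card : ℝ) + 1) := by
  intro j hj
  induction j with
  | zero => simp [LONDsets]
  | succ n ih =>
    obtain ⟨hsub, hcard, hthr⟩ := ih (Nat.le_of_succ_le hj)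
    have haccept : q (n + 1) ≤ α * γ (n + 1) * (((LONDsets α γ q n).card : ℝ) + 1) →
        p (n + 1) ≤ α * γ (n + 1) * (((LONDsets α γ p n).card : ℝ) + 1) := fun h =>
      le_trans (hpq (n + 1) hj) (le_trans h hthr)
    have hsub' : LONDsets α γ q (n + 1) ⊆ LONDsets α γ p (n + 1) := by
      simp only [LONDsets]
      split_ifs with h1 h2 h2
      · exact Finset.insert_subset_insert _ hsub
      · exact absurd (haccept h1) h2
      · exact hsub.trans (Finset.subset_insert _ _)
      · exact hsub
    refine ⟨hsub', Finset.card_le_card hsub', ?_⟩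
    have := Finset.card_le_card hsub'
    have : (((LONDsets α γ q (n + 1)).card : ℝ) + 1) ≤ (((LONDsets α γ p (n + 1)).card : ℝ) + 1) := by
      exact_mod_cast Nat.add_le_add_right this 1
    exact mul_le_mul_of_nonneg_left this (mul_nonneg hα0 (hγ0 _))
end
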